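/- For every positive integer j ≥ 1, in the graded ring ℂ[H_0,…,H_d]/(H_0⁴, H_1⁴(-H_0+2H_1-H_2), …, H_{d-1}⁴(-H_{d-2}+2H_{d-1}-H_d), H_d⁴) with d ≥ j+1, the relation H_0³H_1⁴⋯H_{j-1}⁴H_j⁵ = (j/(j+1))·H_0³H_1⁴⋯H_j⁴H_{j+1} holds. -/

import Mathlib

open MvPolynomial Finset
open Fin.NatCast

noncomputable def chowIdealD (d : ℕ) : Ideal (MvPolynomial (Fin (d + 1)) ℂ) :=
  Ideal.span ({X (0 : Fin (d + 1)) ^ 4, X (d : Fin (d + 1)) ^ 4} ∪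
    {p | ∃ i : ℕ, 1 ≤ i ∧ i ≤ d - 1 ∧
      p = X (i : Fin (d + 1)) ^ 4 *
        (-X ((i - 1 : ℕ) : Fin (d + 1)) + 2 * X (i : Fin (d + 1))
          - X ((i + 1 : ℕ) : Fin (d + 1)))})

lemma rel_mem (d i : ℕ) (h1 : 1 ≤ i) (h2 : i ≤ d - 1) :
    X (i : Fin (d + 1)) ^ 4 *
      (-X ((i - 1 : ℕ) : Fin (d + 1)) + 2 * X (i : Fin (d + 1)) - X ((i + 1 : ℕ) : Fin (d + 1)))
      ∈ chowIdealD d :=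
  Ideal.subset_span (Or.inr ⟨i, h1, h2, rfl⟩)

lemma x0_mem (d : ℕ) : X (0 : Fin (d + 1)) ^ 4 ∈ chowIdealD d :=
  Ideal.subset_span (Or.inl (Set.mem_insert _ _))

lemma smul_mk (d : ℕ) (c : ℂ) (q : MvPolynomial (Fin (d + 1)) ℂ) :
    Ideal.Quotient.mk (chowIdealD d) (C c * q) = c • Ideal.Quotient.mk (chowIdealD d) q := by
  rw [← smul_eq_C_mul, ← Ideal.Quotient.mkₐ_eq_mk ℂ]
  exact map_smul _ c q

lemma two_smul_rel (d i : ℕ) (h1 : 1 ≤ i) (h2 : i ≤ d - 1)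
    (M : MvPolynomial (Fin (d + 1)) ℂ) :
    (2 : ℂ) • Ideal.Quotient.mk (chowIdealD d) (M * X (i : Fin (d + 1)) ^ 5)
      = Ideal.Quotient.mk (chowIdealD d)
          (M * X (i : Fin (d + 1)) ^ 4 * X ((i - 1 : ℕ) : Fin (d + 1)))
        + Ideal.Quotient.mk (chowIdealD d)
          (M * X (i : Fin (d + 1)) ^ 4 * X ((i + 1 : ℕ) : Fin (d + 1))) := by
  have h0 : Ideal.Quotient.mk (chowIdealD d)
      (M * (X (i : Fin (d + 1)) ^ 4 *
        (-X ((i - 1 : ℕ) : Fin (d + 1)) + 2 * X (i : Fin (d + 1))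
          - X ((i + 1 : ℕ) : Fin (d + 1))))) = 0 :=
    Ideal.Quotient.eq_zero_iff_mem.mpr (Ideal.mul_mem_left _ _ (rel_mem d i h1 h2))
  have hid : M * (X (i : Fin (d + 1)) ^ 4 *
        (-X ((i - 1 : ℕ) : Fin (d + 1)) + 2 * X (i : Fin (d + 1))
          - X ((i + 1 : ℕ) : Fin (d + 1))))
      = C (2 : ℂ) * (M * X (i : Fin (d + 1)) ^ 5)
        - M * X (i : Fin (d + 1)) ^ 4 * X ((i - 1 : ℕ) : Fin (d + 1))
        - M * X (i : Fin (d + 1)) ^ 4 * X ((i + 1 : ℕ) : Fin (d + 1)) := by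
    rw [map_ofNat C 2]; ring
  rw [hid, map_sub, map_sub, smul_mk, sub_sub, sub_eq_zero] at h0
  exact h0

theorem stmt17 (d j : ℕ) (hd : 2 ≤ d) (hj : 1 ≤ j) (hjd : j ≤ d - 1) :
    Ideal.Quotient.mk (chowIdealD d)
        (X (0 : Fin (d + 1)) ^ 3 * (∏ i ∈ Icc 1 (j - 1), X (i : Fin (d + 1)) ^ 4) *
          X (j : Fin (d + 1)) ^ 5)
      = ((j : ℂ) / ((j : ℂ) + 1)) •
        Ideal.Quotient.mk (chowIdealD d)
          (X (0 : Fin (d + 1)) ^ 3 * (∏ i ∈ Icc 1 j, X (i : Fin (d + 1)) ^ 4) *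
            X ((j + 1 : ℕ) : Fin (d + 1))) := by
  revert hjd
  induction j, hj using Nat.le_induction with
  | base =>
    intro hjd
    have key := two_smul_rel d 1 le_rfl (by omega) (X (0 : Fin (d + 1)) ^ 3)
    norm_num at key
    have hz : Ideal.Quotient.mk (chowIdealD d)
        (X (0 : Fin (d + 1)) ^ 3 * X ((1 : ℕ) : Fin (d + 1)) ^ 4 * X (0 : Fin (d + 1))) = 0 := by
      rw [show X (0 : Fin (d + 1)) ^ 3 * X ((1 : ℕ) : Fin (d + 1)) ^ 4 * X (0 : Fin (d + 1))
          = X ((1 : ℕ) : Fin (d + 1)) ^ 4 * X (0 : Fin (d + 1)) ^ 4 by ring]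
      exact Ideal.Quotient.eq_zero_iff_mem.mpr (Ideal.mul_mem_left _ _ (x0_mem d))
    norm_num at hz
    rw [show Icc 1 (1-1) = (∅:Finset ℕ) from Finset.Icc_eq_empty (by norm_num)]
    norm_num [Finset.Icc_self]
    rw [hz, zero_add] at key
    rw [← key, smul_smul]
    norm_num
  | succ k hk ih =>
    intro hjd
    obtain ⟨m, rfl⟩ : ∃ m, k = m + 1 := ⟨k - 1, by omega⟩
    have ih' := ih (by omega)
    simp only [Nat.add_sub_cancel] at ih' ⊢
    have key := two_smul_rel d (m+1+1) (by omega) hjd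
      (X (0 : Fin (d+1)) ^ 3 * ∏ i ∈ Icc 1 (m+1), X (i : Fin (d+1)) ^ 4)
    simp only [Nat.add_sub_cancel] at key
    have hs1 : (∏ i ∈ Icc 1 (m+1), X (i : Fin (d+1)) ^ 4)
        = (∏ i ∈ Icc 1 m, X (i : Fin (d+1)) ^ 4) * (X ((m+1 : ℕ) : Fin (d+1)) : MvPolynomial (Fin (d+1)) ℂ) ^ 4 :=
      Finset.prod_Icc_succ_top (by omega) _
    have hs2 : (∏ i ∈ Icc 1 (m+1+1), X (i : Fin (d+1)) ^ 4)
        = (∏ i ∈ Icc 1 (m+1), X (i : Fin (d+1)) ^ 4) * (X ((m+1+1 : ℕ) : Fin (d+1)) : MvPolynomial (Fin (d+1)) ℂ) ^ 4 :=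
      Finset.prod_Icc_succ_top (by omega) _
    have h1 : Ideal.Quotient.mk (chowIdealD d)
        ((X (0 : Fin (d+1)) ^ 3 * ∏ i ∈ Icc 1 (m+1), X (i : Fin (d+1)) ^ 4)
          * X ((m+1+1 : ℕ) : Fin (d+1)) ^ 4 * X ((m+1 : ℕ) : Fin (d+1)))
        = (((m+1 : ℕ) : ℂ) / (((m+1 : ℕ) : ℂ) + 1)) • Ideal.Quotient.mk (chowIdealD d)
          ((X (0 : Fin (d+1)) ^ 3 * ∏ i ∈ Icc 1 (m+1), X (i : Fin (d+1)) ^ 4)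
            * X ((m+1+1 : ℕ) : Fin (d+1)) ^ 5) := by
      rw [show (X (0 : Fin (d+1)) ^ 3 * ∏ i ∈ Icc 1 (m+1), X (i : Fin (d+1)) ^ 4)
            * X ((m+1+1 : ℕ) : Fin (d+1)) ^ 4 * X ((m+1 : ℕ) : Fin (d+1))
          = (X (0 : Fin (d+1)) ^ 3 * (∏ i ∈ Icc 1 m, X (i : Fin (d+1)) ^ 4)
              * X ((m+1 : ℕ) : Fin (d+1)) ^ 5) * X ((m+1+1 : ℕ) : Fin (d+1)) ^ 4 by
        rw [hs1]; ring]
      rw [map_mul, ih', smul_mul_assoc, ← map_mul]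
      exact congrArg (fun p => _ • Ideal.Quotient.mk (chowIdealD d) p) (by ring)
    rw [h1] at key
    have hB := eq_sub_of_add_eq' key.symm
    rw [← sub_smul] at hB
    rw [show X (0 : Fin (d+1)) ^ 3 * (∏ i ∈ Icc 1 (m+1+1), X (i : Fin (d+1)) ^ 4)
          * X ((m+1+1+1 : ℕ) : Fin (d+1))
        = (X (0 : Fin (d+1)) ^ 3 * ∏ i ∈ Icc 1 (m+1), X (i : Fin (d+1)) ^ 4)
          * X ((m+1+1 : ℕ) : Fin (d+1)) ^ 4 * X ((m+1+1+1 : ℕ) : Fin (d+1)) by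
      rw [hs2]; ring]
    rw [hB, smul_smul]
    rw [show (((m+1+1 : ℕ) : ℂ) / (((m+1+1 : ℕ) : ℂ) + 1))
          * (2 - ((m+1 : ℕ) : ℂ) / (((m+1 : ℕ) : ℂ) + 1)) = 1 by
      push_cast
      have hb : (m : ℂ) + 1 + 1 ≠ 0 := by
        have : ((m + 2 : ℕ) : ℂ) ≠ 0 := Nat.cast_ne_zero.mpr (by omega)
        push_cast at this
        rw [show (m : ℂ) + 1 + 1 = (m : ℂ) + 2 by ring]; exact this
      have hc : (m : ℂ) + 1 + 1 + 1 ≠ 0 := by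
        have : ((m + 3 : ℕ) : ℂ) ≠ 0 := Nat.cast_ne_zero.mpr (by omega)
        push_cast at this
        rw [show (m : ℂ) + 1 + 1 + 1 = (m : ℂ) + 3 by ring]; exact this
      field_simp
      ring]
    rw [one_smul]
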